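/- For every a ∈ K \ {-1,0,1/2,1,2}, the projectivities of P^3_K induced by the matrices M_1 = [[2,2,2,0],[0,-2,0,0],[-2,0,0,0],[0,1,3,-2]] and M_2 = [[2,2,2,0],[0,-2,0,0],[0,0,-2,0],[0,-2,-3,2]] stabilise the quartic surface Q(a) = 0, i.e., Q(a) composed with M_i^{-1} is a nonzero scalar multiple of Q(a). -/

import Mathlib

/-- The quartic monoid `Q(a)` as a function of the homogeneous coordinates
`(x, y, z, t) = (v 0, v 1, v 2, v 3)`. -/
def Qa {K : Type*} [Field K] (a : K) (v : Fin 4 → K) : K :=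
  2*a*(v 0)^3*(v 1) + 4*a*(v 0)^2*(v 1)^2 + 2*a*(v 0)*(v 1)^3
    - (2*a - 1)*(a - 2)*(v 0)^3*(v 2)
    - (5*a^2 - 17*a + 5)*(v 0)^2*(v 1)*(v 2)
    - 3*(a^2 - 4*a + 1)*(v 0)*(v 1)^2*(v 2) + a*(v 1)^3*(v 2)
    - 3*(2*a - 1)*(a - 2)*(v 0)^2*(v 2)^2
    - (7*a^2 - 19*a + 7)*(v 0)*(v 1)*(v 2)^2 + 2*a*(v 1)^2*(v 2)^2
    - 2*(2*a - 1)*(a - 2)*(v 0)*(v 2)^3 + a*(v 1)*(v 2)^3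
    - 2*a*(v 3)*(v 0)^2*(v 1) - 2*a*(v 3)*(v 0)*(v 1)^2
    + 2*(2*a - 1)*(a - 2)*(v 3)*(v 0)^2*(v 2)
    + 4*(a^2 - 3*a + 1)*(v 3)*(v 0)*(v 1)*(v 2) - 2*a*(v 3)*(v 1)^2*(v 2)
    + 2*(2*a - 1)*(a - 2)*(v 3)*(v 0)*(v 2)^2 - 2*a*(v 3)*(v 1)*(v 2)^2

set_option maxHeartbeats 1000000 in
/-- for every `a ∉ {-1, 0, 1/2, 1, 2}`, the projectivities
induced by the matrices `M₁` and `M₂` stabilise the surface `Q(a) = 0`: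
`Q(a)` composed with `Mᵢ⁻¹` is a nonzero scalar multiple of `Q(a)`. -/
theorem stmt16 {K : Type*} [Field K] [CharZero K] (a : K)
    (ha : a ≠ -1 ∧ a ≠ 0 ∧ a ≠ 1/2 ∧ a ≠ 1 ∧ a ≠ 2) :
    ∀ M ∈ ({!![2, 2, 2, 0; 0, -2, 0, 0; -2, 0, 0, 0; 0, 1, 3, -2],
             !![2, 2, 2, 0; 0, -2, 0, 0; 0, 0, -2, 0; 0, -2, -3, 2]} :
        Set (Matrix (Fin 4) (Fin 4) K)),
      ∃ lam : K, lam ≠ 0 ∧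
        ∀ v : Fin 4 → K, Qa a (M⁻¹.mulVec v) = lam * Qa a v := by
  intro M hM
  rcases hM with rfl | hM
  · refine ⟨1/16, by norm_num, fun v => ?_⟩
    have hprod : (!![(2:K), 2, 2, 0; 0, -2, 0, 0; -2, 0, 0, 0; 0, 1, 3, -2]) *
        !![0, 0, -2, 0; 0, -2, 0, 0; 2, 2, 2, 0; 3, 2, 3, -2] = (4:K) • 1 := by
      ext i j
      fin_cases i <;> fin_cases j <;>
        norm_num [Matrix.mul_apply, Fin.sum_univ_four, Matrix.one_apply, Fin.ext_iff,
          Matrix.vecHead, Matrix.vecTail, Matrix.cons_val_two, Matrix.cons_val_three,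
          Matrix.head_cons, Matrix.tail_cons]
    have hinv : (!![(2:K), 2, 2, 0; 0, -2, 0, 0; -2, 0, 0, 0; 0, 1, 3, -2])⁻¹ =
        (4:K)⁻¹ • !![0, 0, -2, 0; 0, -2, 0, 0; 2, 2, 2, 0; 3, 2, 3, -2] := by
      apply Matrix.inv_eq_right_inv
      rw [Matrix.mul_smul, hprod, smul_smul, inv_mul_cancel₀ (by norm_num : (4:K) ≠ 0),
        one_smul]
    rw [hinv, Matrix.smul_mulVec]
    have h0 : (!![(0:K), 0, -2, 0; 0, -2, 0, 0; 2, 2, 2, 0; 3, 2, 3, -2]).mulVec v =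
        ![-2*v 2, -2*v 1, 2*v 0 + 2*v 1 + 2*v 2, 3*v 0 + 2*v 1 + 3*v 2 - 2*v 3] := by
      funext i
      fin_cases i <;>
        simp [Matrix.mulVec, dotProduct, Fin.sum_univ_four, Matrix.vecHead,
          Matrix.vecTail] <;> ring
    rw [h0]
    simp only [Qa, Pi.smul_apply, smul_eq_mul, Matrix.cons_val_zero, Matrix.cons_val_one,
      Matrix.head_cons, Matrix.cons_val_two, Matrix.tail_cons, Matrix.cons_val_three]
    ring
  · rw [Set.mem_singleton_iff] at hM
    subst hM
    refine ⟨-(1/16), by norm_num, fun v => ?_⟩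
    have hprod : (!![(2:K), 2, 2, 0; 0, -2, 0, 0; 0, 0, -2, 0; 0, -2, -3, 2]) *
        !![2, 2, 2, 0; 0, -2, 0, 0; 0, 0, -2, 0; 0, -2, -3, 2] = (4:K) • 1 := by
      ext i j
      fin_cases i <;> fin_cases j <;>
        norm_num [Matrix.mul_apply, Fin.sum_univ_four, Matrix.one_apply, Fin.ext_iff,
          Matrix.vecHead, Matrix.vecTail, Matrix.cons_val_two, Matrix.cons_val_three,
          Matrix.head_cons, Matrix.tail_cons]
    have hinv : (!![(2:K), 2, 2, 0; 0, -2, 0, 0; 0, 0, -2, 0; 0, -2, -3, 2])⁻¹ =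
        (4:K)⁻¹ • !![2, 2, 2, 0; 0, -2, 0, 0; 0, 0, -2, 0; 0, -2, -3, 2] := by
      apply Matrix.inv_eq_right_inv
      rw [Matrix.mul_smul, hprod, smul_smul, inv_mul_cancel₀ (by norm_num : (4:K) ≠ 0),
        one_smul]
    rw [hinv, Matrix.smul_mulVec]
    have h0 : (!![(2:K), 2, 2, 0; 0, -2, 0, 0; 0, 0, -2, 0; 0, -2, -3, 2]).mulVec v =
        ![2*v 0 + 2*v 1 + 2*v 2, -2*v 1, -2*v 2, -2*v 1 - 3*v 2 + 2*v 3] := by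
      funext i
      fin_cases i <;>
        simp [Matrix.mulVec, dotProduct, Fin.sum_univ_four, Matrix.vecHead,
          Matrix.vecTail] <;> ring
    rw [h0]
    simp only [Qa, Pi.smul_apply, smul_eq_mul, Matrix.cons_val_zero, Matrix.cons_val_one,
      Matrix.head_cons, Matrix.cons_val_two, Matrix.tail_cons, Matrix.cons_val_three]
    ring
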